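/- For each i with 1 ≤ i ≤ n, the creation operator B_i^+ = Σ_{J ⊂ {1,…,n}, |J| = i} x_J D_J maps symmetric polynomials in x_1,…,x_n to symmetric polynomials in x_1,…,x_n. -/

import Mathlib

open MvPolynomial

noncomputable section Jack

/-- The field `ℚ(α)` of rational functions in the Jack parameter `α`. -/
abbrev FF : Type := RatFunc ℚ

/-- The Jack parameter `α`, a transcendental element of `ℚ(α)`. -/
abbrev alpha : FF := RatFunc.X

/-- Polynomials in `x_1, …, x_n` over `ℚ(α)`. -/
abbrev R (n : ℕ) : Type := MvPolynomial (Fin n) FF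

variable {n : ℕ}

/-- The exchange operator `K_{ij}` permuting the variables `x_i` and `x_j`. -/
def Kex (i j : Fin n) (p : R n) : R n := rename (Equiv.swap i j) p

lemma kex_dvd (i j : Fin n) (p : R n) : (X i - X j : R n) ∣ (p - Kex i j p) := by
  unfold Kex
  induction p using MvPolynomial.induction_on with
  | C a => simp
  | add p q hp hq =>
      have h := dvd_add hp hq
      rw [map_add]
      convert h using 1
      ring
  | mul_X p k hp =>
      rw [map_mul, rename_X]
      have key : p * X k - rename (Equiv.swap i j) p * X (Equiv.swap i j k)
          = (p - rename (Equiv.swap i j) p) * X k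
            + rename (Equiv.swap i j) p * (X k - X (Equiv.swap i j k)) := by ring
      rw [key]
      refine dvd_add (hp.mul_right _) ?_
      rcases eq_or_ne k i with rfl | hki
      · rw [Equiv.swap_apply_left]
        exact Dvd.intro_left _ rfl
      rcases eq_or_ne k j with rfl | hkj
      · rw [Equiv.swap_apply_right]
        refine dvd_mul_of_dvd_right ?_ _
        exact dvd_sub_comm.mp dvd_rfl
      · rw [Equiv.swap_apply_of_ne_of_ne hki hkj]
        simp

/-- The divided difference `(p - K_{ij} p)/(x_i - x_j)`, a polynomial. -/
def dd (i j : Fin n) (p : R n) : R n := (kex_dvd i j p).choose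

lemma dd_spec (i j : Fin n) (p : R n) :
    p - Kex i j p = (X i - X j) * dd i j p := (kex_dvd i j p).choose_spec

/-- The Dunkl--Cherednik operator
`D_i = α x_i ∂/∂x_i + Σ_{j ≠ i} (x_i/(x_i - x_j))(1 - K_{ij})`. -/
def D (i : Fin n) (p : R n) : R n :=
  C alpha * (X i * pderiv i p) + ∑ j ∈ Finset.univ.erase i, X i * dd i j p

/-- The shifted operator `D_i + m`. -/
def Dm (i : Fin n) (m : ℤ) (p : R n) : R n := D i p + m • p

/-- `(D_{j_1}+m)(D_{j_2}+m+1)⋯` along a list of indices, applied to `p`. -/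
def DJl : List (Fin n) → ℤ → R n → R n
  | [], _, p => p
  | j :: t, m, p => Dm j m (DJl t (m + 1) p)

/-- `D_J = (D_{j_1}+1)(D_{j_2}+2)⋯(D_{j_ℓ}+ℓ)` for `J = {j_1 < … < j_ℓ}`. -/
def DJ (J : Finset (Fin n)) (p : R n) : R n := DJl (J.sort (· ≤ ·)) 1 p

/-- The creation operator `B_i^+ = Σ_{|J| = i} x_J D_J`. -/
def Bop (i : ℕ) (p : R n) : R n :=
  ∑ J ∈ Finset.univ.powersetCard i, (∏ k ∈ J, X k) * DJ J p

/-- The canonical image of `ℤ[α]` in `ℚ(α)`. -/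
def toFF (q : Polynomial ℤ) : FF :=
  algebraMap (Polynomial ℚ) FF (q.map (Int.castRingHom ℚ))

/-- A scalar in `ℚ(α)` is a polynomial in `α` with integer coefficients. -/
def IntAlpha (c : FF) : Prop := ∃ q : Polynomial ℤ, c = toFF q

/-- `p` is symmetric in the variables indexed by `J`. -/
def SymmIn (J : Finset (Fin n)) (p : R n) : Prop :=
  ∀ i ∈ J, ∀ j ∈ J, Kex i j p = p

/-- The monomial symmetric polynomial `m_μ`, the sum of `x^ν` over the distinct
permutations `ν` of the exponent vector `μ`. -/
def msymmF (μ : Fin n → ℕ) : R n :=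
  ∑ ν ∈ Finset.image
      (fun σ : Equiv.Perm (Fin n) => Finsupp.equivFunOnFinite.symm (μ ∘ σ))
      Finset.univ,
    monomial ν 1

/-- The power-sum product `p_λ = p_{λ_1} p_{λ_2} ⋯` over the nonzero parts of `λ`. -/
def pprod (lam : Fin n → ℕ) : R n :=
  ∏ i ∈ Finset.univ.filter (fun i => lam i ≠ 0), psum (Fin n) FF (lam i)

/-- The number of (nonzero) parts `ℓ(λ)`. -/
def plen (lam : Fin n → ℕ) : ℕ := (Finset.univ.filter fun i => lam i ≠ 0).card

/-- `z_λ = ∏_i i^{m_i(λ)} m_i(λ)!`. -/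
def zed (lam : Fin n → ℕ) : ℕ :=
  ∏ i ∈ Finset.Icc 1 (∑ j, lam j),
    i ^ ((Finset.univ.filter fun j => lam j = i).card)
      * Nat.factorial ((Finset.univ.filter fun j => lam j = i).card)

/-- Dominance order: `μ ≤ λ` (same total degree). -/
def Dominates (μ lam : Fin n → ℕ) : Prop :=
  (∑ i, μ i = ∑ i, lam i) ∧
    ∀ k : Fin n, ∑ i ∈ Finset.univ.filter (· ≤ k), μ i ≤
      ∑ i ∈ Finset.univ.filter (· ≤ k), lam i

/-- Iterated Rodrigues construction: `rodA lam i = (B_i^+)^{λ_i-λ_{i+1}} ⋯ (B_1^+)^{λ_1-λ_2}·1`,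
where `lam k` denotes `λ_k` (1-indexed). -/
def rodA (lam : ℕ → ℕ) : ℕ → R n
  | 0 => 1
  | i + 1 => (Bop (i + 1))^[lam (i + 1) - lam (i + 2)] (rodA lam i)

/-- `(B_n^+)^{λ_n}(B_{n-1}^+)^{λ_{n-1}-λ_n} ⋯ (B_1^+)^{λ_1-λ_2}·1`. -/
def rod (lam : ℕ → ℕ) : R n := rodA lam n

/-- The field of rational functions in `x_1,…,x_n` over `ℚ(α)`. -/
abbrev KF (n : ℕ) : Type := FractionRing (R n)

/-- The embedding of polynomials into rational functions. -/
def toK : R n →+* KF n := algebraMap (R n) (KF n)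

/-- The Sutherland operator
`H(α) = α Σ_j (x_j ∂_j)^2 + Σ_{j<k} ((x_j+x_k)/(x_j-x_k))(x_j ∂_j − x_k ∂_k)`,
applied to a polynomial, with values in the field of rational functions. -/
def Hop (p : R n) : KF n :=
  toK (C alpha * ∑ j, X j * pderiv j (X j * pderiv j p))
    + ∑ jk ∈ (Finset.univ : Finset (Fin n × Fin n)).filter (fun jk => jk.1 < jk.2),
        (toK (X jk.1 + X jk.2) / toK (X jk.1 - X jk.2))
          * toK (X jk.1 * pderiv jk.1 p - X jk.2 * pderiv jk.2 p)

end Jack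
section Aux
open MvPolynomial Finset
variable {n : ℕ}

lemma Xsub_ne (i j : Fin n) (h : i ≠ j) : (X i - X j : R n) ≠ 0 :=
  sub_ne_zero.mpr (fun he => h (MvPolynomial.X_injective he))

lemma Kex_eq_rename (i j : Fin n) (p : R n) : Kex i j p = rename (Equiv.swap i j) p := rfl

lemma dd_unique {i j : Fin n} (h : i ≠ j) {p q : R n}
    (hq : p - Kex i j p = (X i - X j) * q) : dd i j p = q := by
  have := (dd_spec i j p).symm.trans hq
  exact (mul_left_cancel₀ (Xsub_ne i j h) this)

lemma Kex_Kex (i j : Fin n) (p : R n) : Kex i j (Kex i j p) = p := by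
  unfold Kex
  rw [rename_rename]
  rw [show (⇑(Equiv.swap i j) ∘ ⇑(Equiv.swap i j)) = id from funext (by simp)]
  exact DFunLike.congr_fun rename_id p

lemma Kex_comm (i j : Fin n) (p : R n) : Kex i j p = Kex j i p := by
  unfold Kex; rw [Equiv.swap_comm]

lemma dd_of_fixed {i j : Fin n} (h : i ≠ j) {p : R n} (hp : Kex i j p = p) :
    dd i j p = 0 := by
  apply dd_unique h; rw [hp]; ring

lemma dd_rev {i j : Fin n} (h : i ≠ j) (p : R n) : dd j i p = - dd i j p := by
  apply dd_unique h.symm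
  rw [Kex_comm j i]
  linear_combination (dd_spec i j p)

lemma dd_add {i j : Fin n} (h : i ≠ j) (p q : R n) :
    dd i j (p + q) = dd i j p + dd i j q := by
  apply dd_unique h
  unfold Kex
  rw [map_add]
  have h1 := dd_spec i j p
  have h2 := dd_spec i j q
  unfold Kex at h1 h2
  ring_nf
  ring_nf at h1 h2
  linear_combination h1 + h2

lemma dd_C_mul {i j : Fin n} (h : i ≠ j) (c : FF) (p : R n) :
    dd i j (C c * p) = C c * dd i j p := by
  apply dd_unique h
  unfold Kex
  rw [map_mul, rename_C]
  have h1 := dd_spec i j p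
  unfold Kex at h1
  linear_combination (C c : R n) * h1

lemma dd_mul {i j : Fin n} (h : i ≠ j) (p r : R n) :
    dd i j (p * r) = p * dd i j r + Kex i j r * dd i j p := by
  apply dd_unique h
  have h1 := dd_spec i j p
  have h2 := dd_spec i j r
  unfold Kex at h1 h2 ⊢
  rw [map_mul]
  linear_combination p * h2 + (rename (⇑(Equiv.swap i j)) r) * h1

lemma Kex_X_left (i j : Fin n) : Kex i j (X i) = (X j : R n) := by
  unfold Kex; simp

lemma Kex_X_right (i j : Fin n) : Kex i j (X j) = (X i : R n) := by
  unfold Kex; simp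

lemma Kex_X_other {i j k : Fin n} (hki : k ≠ i) (hkj : k ≠ j) :
    Kex i j (X k) = (X k : R n) := by
  unfold Kex; rw [rename_X, Equiv.swap_apply_of_ne_of_ne hki hkj]

lemma dd_X_other {i j k : Fin n} (h : i ≠ j) (hki : k ≠ i) (hkj : k ≠ j) :
    dd i j (X k) = 0 := dd_of_fixed h (Kex_X_other hki hkj)

lemma dd_X_right {i j : Fin n} (h : i ≠ j) : dd i j (X j) = -1 := by
  apply dd_unique h
  rw [Kex_X_right]; ring

lemma rename_dd (σ : Equiv.Perm (Fin n)) {i j : Fin n} (h : i ≠ j) (p : R n) :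
    rename σ (dd i j p) = dd (σ i) (σ j) (rename σ p) := by
  refine (dd_unique (fun he => h (σ.injective he)) ?_).symm
  have h1 := dd_spec i j p
  have key : Kex (σ i) (σ j) (rename (⇑σ) p) = rename (⇑σ) (Kex i j p) := by
    unfold Kex
    rw [rename_rename, rename_rename]
    have hfe : (⇑(Equiv.swap (σ i) (σ j)) ∘ ⇑σ) = (⇑σ ∘ ⇑(Equiv.swap i j)) := by
      funext x
      simp [Equiv.swap_apply_apply, Equiv.Perm.mul_apply]
    rw [hfe]
  rw [key]
  have := congrArg (rename (⇑σ)) h1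
  rw [map_sub, map_mul, map_sub, rename_X, rename_X] at this
  exact this

end Aux
section Aux2
open MvPolynomial Finset
variable {n : ℕ}

lemma swap_comp (σ : Equiv.Perm (Fin n)) (x y : Fin n) :
    ⇑σ ∘ ⇑(Equiv.swap x y) = ⇑(Equiv.swap (σ x) (σ y)) ∘ ⇑σ := by
  funext z
  simp [Equiv.swap_apply_apply, Equiv.Perm.mul_apply]

lemma swap_swap_comp (x y : Fin n) :
    ⇑(Equiv.swap x y) ∘ ⇑(Equiv.swap x y) = (id : Fin n → Fin n) :=
  funext (by simp)

lemma Kex_sub (i j : Fin n) (p q : R n) : Kex i j (p - q) = Kex i j p - Kex i j q :=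
  map_sub (rename _) p q

lemma Kex_add (i j : Fin n) (p q : R n) : Kex i j (p + q) = Kex i j p + Kex i j q :=
  map_add (rename _) p q

lemma Kex_mul (i j : Fin n) (p q : R n) : Kex i j (p * q) = Kex i j p * Kex i j q :=
  map_mul (rename _) p q

lemma Kex_C (i j : Fin n) (c : FF) : Kex i j (C c) = (C c : R n) :=
  rename_C _ c

lemma pderiv_pderiv_X (i j k : Fin n) : pderiv i (pderiv j (X k : R n)) = 0 := by
  rcases eq_or_ne k j with rfl | h
  · simp
  · simp [pderiv_X_of_ne h]

lemma pderiv_comm (i j : Fin n) (p : R n) :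
    pderiv i (pderiv j p) = pderiv j (pderiv i p) := by
  induction p using MvPolynomial.induction_on with
  | C a => simp
  | add p q hp hq => simp [hp, hq]
  | mul_X p k hp =>
      simp only [pderiv_mul, map_add, pderiv_mul, hp]
      rw [pderiv_pderiv_X, pderiv_pderiv_X]
      ring

lemma pderiv_Kex {i j k : Fin n} (hki : k ≠ i) (hkj : k ≠ j) (p : R n) :
    pderiv k (Kex i j p) = Kex i j (pderiv k p) := by
  have h := pderiv_rename (Equiv.swap i j).injective k p
  rw [Equiv.swap_apply_of_ne_of_ne hki hkj] at h
  exact h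

lemma pderiv_dd {i j k : Fin n} (h : i ≠ j) (hki : k ≠ i) (hkj : k ≠ j) (p : R n) :
    pderiv k (dd i j p) = dd i j (pderiv k p) := by
  refine (dd_unique h ?_).symm
  have h1 := congrArg (pderiv k) (dd_spec i j p)
  rw [map_sub, pderiv_mul, map_sub, pderiv_X_of_ne (Ne.symm hki),
    pderiv_X_of_ne (Ne.symm hkj), pderiv_Kex hki hkj] at h1
  linear_combination h1

lemma Kex_pderiv (a b : Fin n) (q : R n) :
    Kex a b (pderiv b q) = pderiv a (Kex a b q) := by
  have h := pderiv_rename (Equiv.swap a b).injective b q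
  rw [Equiv.swap_apply_right] at h
  exact h.symm

/-- disjoint divided differences commute -/
lemma dd_comm_disjoint {i j k l : Fin n} (hij : i ≠ j) (hkl : k ≠ l)
    (hik : i ≠ k) (hil : i ≠ l) (hjk : j ≠ k) (hjl : j ≠ l) (p : R n) :
    dd i j (dd k l p) = dd k l (dd i j p) := by
  have hcomp : ⇑(Equiv.swap i j) ∘ ⇑(Equiv.swap k l)
      = ⇑(Equiv.swap k l) ∘ ⇑(Equiv.swap i j) := by
    rw [swap_comp, Equiv.swap_apply_of_ne_of_ne (Ne.symm hik) (Ne.symm hjk),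
      Equiv.swap_apply_of_ne_of_ne (Ne.symm hil) (Ne.symm hjl)]
  have hswap : ∀ r : R n, Kex i j (Kex k l r) = Kex k l (Kex i j r) := by
    intro r
    unfold Kex
    rw [rename_rename, rename_rename, hcomp]
  have hKdd : Kex i j (dd k l p) = dd k l (Kex i j p) := by
    have h := rename_dd (Equiv.swap i j) hkl p
    rw [Equiv.swap_apply_of_ne_of_ne (Ne.symm hik) (Ne.symm hjk),
      Equiv.swap_apply_of_ne_of_ne (Ne.symm hil) (Ne.symm hjl)] at h
    exact h
  have hKdd' : Kex k l (dd i j p) = dd i j (Kex k l p) := by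
    have h := rename_dd (Equiv.swap k l) hij p
    rw [Equiv.swap_apply_of_ne_of_ne hik hil, Equiv.swap_apply_of_ne_of_ne hjk hjl] at h
    exact h
  apply mul_left_cancel₀ (mul_ne_zero (Xsub_ne i j hij) (Xsub_ne k l hkl))
  have e1 := dd_spec i j (dd k l p)
  have e2 := dd_spec k l (dd i j p)
  have e3 := dd_spec k l p
  have e4 := dd_spec i j p
  have e5 := congrArg (Kex i j) e3
  rw [Kex_sub, Kex_mul, Kex_sub, Kex_X_other (Ne.symm hik) (Ne.symm hjk),
    Kex_X_other (Ne.symm hil) (Ne.symm hjl), hKdd] at e5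
  have e6 := congrArg (Kex k l) e4
  rw [Kex_sub, Kex_mul, Kex_sub, Kex_X_other hik hil, Kex_X_other hjk hjl, hKdd'] at e6
  rw [hKdd] at e1
  rw [hKdd'] at e2
  rw [hswap p] at e5
  -- e1 : dd k l p - dd k l (Kex i j p) = (X i - X j) * dd i j (dd k l p)
  -- e2 : dd i j p - dd i j (Kex k l p) = (X k - X l) * dd k l (dd i j p)
  -- e3 : p - Kex k l p = (X k - X l) * dd k l p
  -- e4 : p - Kex i j p = (X i - X j) * dd i j p
  -- e5 : Kex i j p - Kex k l (Kex i j p) = (X k - X l) * dd k l (Kex i j p)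
  -- e6 : Kex k l p - Kex i j (Kex k l p) = (X i - X j) * dd i j (Kex k l p)
  linear_combination (-(X k - X l) : R n) * e1 + (X i - X j) * e2 - e3 + e4 + e5 - e6

/-- `[d_{ak}, d_{bk}] q = 0` when `q` is symmetric in `a, b`. -/
lemma dd_comm_symm {a b k : Fin n} (hab : a ≠ b) (hak : a ≠ k) (hbk : b ≠ k)
    {q : R n} (hq : Kex a b q = q) :
    dd a k (dd b k q) = dd b k (dd a k q) := by
  apply mul_left_cancel₀
    (mul_ne_zero (mul_ne_zero (Xsub_ne a b hab) (Xsub_ne b k hbk)) (Xsub_ne a k hak))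
  have conj1 : Kex a k (dd b k q) = dd b a (Kex a k q) := by
    have h := rename_dd (Equiv.swap a k) hbk q
    rw [Equiv.swap_apply_of_ne_of_ne (Ne.symm hab) hbk, Equiv.swap_apply_right] at h
    exact h
  have conj2 : Kex b k (dd a k q) = dd a b (Kex b k q) := by
    have h := rename_dd (Equiv.swap b k) hak q
    rw [Equiv.swap_apply_of_ne_of_ne hab hak, Equiv.swap_apply_right] at h
    exact h
  have conj3 : Kex a b (Kex a k q) = Kex b k q := by
    conv_lhs => rw [← hq]
    unfold Kex
    rw [rename_rename, rename_rename]
    have hc : (⇑(Equiv.swap a b) ∘ ⇑(Equiv.swap a k)) ∘ ⇑(Equiv.swap a b)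
        = ⇑(Equiv.swap b k) := by
      rw [swap_comp (Equiv.swap a b) a k, Equiv.swap_apply_left,
        Equiv.swap_apply_of_ne_of_ne (Ne.symm hak) (Ne.symm hbk),
        Function.comp_assoc, swap_swap_comp, Function.comp_id]
    rw [hc]
  have conj4 : Kex a b (Kex b k q) = Kex a k q := by
    conv_lhs => rw [← hq]
    unfold Kex
    rw [rename_rename, rename_rename]
    have hc : (⇑(Equiv.swap a b) ∘ ⇑(Equiv.swap b k)) ∘ ⇑(Equiv.swap a b)
        = ⇑(Equiv.swap a k) := by
      rw [swap_comp (Equiv.swap a b) b k, Equiv.swap_apply_right,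
        Equiv.swap_apply_of_ne_of_ne (Ne.symm hak) (Ne.symm hbk),
        Function.comp_assoc, swap_swap_comp, Function.comp_id]
    rw [hc]
  have e1 := dd_spec a k (dd b k q)
  have e2 := dd_spec b k (dd a k q)
  have e3 := dd_spec b k q
  have e4 := dd_spec a k q
  have e5 := dd_spec b a (Kex a k q)
  have e6 := dd_spec a b (Kex b k q)
  rw [conj1] at e1
  rw [conj2] at e2
  rw [Kex_comm b a, conj3] at e5
  rw [conj4] at e6
  linear_combination (-((X a - X b)*(X b - X k)) : R n) * e1
    + ((X a - X b)*(X a - X k)) * e2 - (X a - X b) * e3 + (X a - X b) * e4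
    - (X b - X k) * e5 - (X a - X k) * e6

end Aux2
section Aux3
open MvPolynomial Finset
variable {n : ℕ}

lemma dd_zero {i j : Fin n} (h : i ≠ j) : dd i j (0 : R n) = 0 :=
  dd_of_fixed h (map_zero _)

lemma Kex_sum (i j : Fin n) {s : Finset (Fin n)} (f : Fin n → R n) :
    Kex i j (∑ k ∈ s, f k) = ∑ k ∈ s, Kex i j (f k) :=
  map_sum (rename _) f s

lemma dd_sum {i j : Fin n} (h : i ≠ j) {s : Finset (Fin n)} (f : Fin n → R n) :
    dd i j (∑ k ∈ s, f k) = ∑ k ∈ s, dd i j (f k) := by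
  induction s using Finset.cons_induction with
  | empty => simpa using dd_zero h
  | cons a s ha ih =>
      rw [Finset.sum_cons, Finset.sum_cons, dd_add h, ih]

/-- Core commutation: `D_a D_b q + D_a q = D_b D_a q + D_b q` for `q` symmetric in `a,b`. -/
lemma D_comm_symm {a b : Fin n} (hab : a ≠ b) {q : R n} (hq : Kex a b q = q) :
    D a (D b q) + D a q = D b (D a q) + D b q := by
  classical
  set S : Finset (Fin n) := (Finset.univ.erase a).erase b with hS
  have hSa : ∀ k ∈ S, k ≠ a := fun k hk =>
    Finset.ne_of_mem_erase (Finset.mem_of_mem_erase hk)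
  have hSb : ∀ k ∈ S, k ≠ b := fun k hk => Finset.ne_of_mem_erase hk
  have hbS : (Finset.univ.erase b).erase a = S := Finset.erase_right_comm
  have haS : (Finset.univ.erase a).erase b = S := rfl
  have haeb : a ∈ Finset.univ.erase b := Finset.mem_erase.mpr ⟨hab, Finset.mem_univ a⟩
  have hbea : b ∈ Finset.univ.erase a := Finset.mem_erase.mpr ⟨hab.symm, Finset.mem_univ b⟩
  set ga : R n := C alpha * pderiv a q + ∑ k ∈ S, dd a k q with hga_def
  set gb : R n := C alpha * pderiv b q + ∑ k ∈ S, dd b k q with hgb_def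
  have hdabq : dd a b q = 0 := dd_of_fixed hab hq
  have hdbaq : dd b a q = 0 := by rw [dd_rev hab q, hdabq, neg_zero]
  have hDb : D b q = X b * gb := by
    unfold D
    rw [← Finset.add_sum_erase _ _ haeb, hbS, hdbaq, mul_zero, zero_add,
      hgb_def, mul_add, Finset.mul_sum]
    ring
  have hDa : D a q = X a * ga := by
    unfold D
    rw [← Finset.add_sum_erase _ _ hbea, haS, hdabq, mul_zero, zero_add,
      hga_def, mul_add, Finset.mul_sum]
    ring
  have hKgb : Kex a b gb = ga := by
    rw [hgb_def, hga_def, Kex_add, Kex_mul, Kex_C, Kex_pderiv a b q, hq, Kex_sum]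
    congr 1
    refine Finset.sum_congr rfl (fun k hk => ?_)
    have h := rename_dd (Equiv.swap a b) (Ne.symm (hSb k hk)) q
    rw [Equiv.swap_apply_right,
      Equiv.swap_apply_of_ne_of_ne (hSa k hk) (hSb k hk)] at h
    rw [Kex_eq_rename, h]
    unfold Kex at hq
    rw [hq]
  have hKga : Kex a b ga = gb := by rw [← hKgb, Kex_Kex]
  set hab' : R n := C alpha * pderiv a gb + ∑ k ∈ S, dd a k gb + dd a b gb with h_hab
  set hba' : R n := C alpha * pderiv b ga + ∑ k ∈ S, dd b k ga + dd b a ga with h_hba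
  have expand : ∀ (c d : Fin n), c ≠ d → ∀ (g g' h' : R n), Kex c d g = g' →
      h' = C alpha * pderiv c g + ∑ k ∈ S, dd c k g + dd c d g →
      (Finset.univ.erase c).erase d = S →
      d ∈ Finset.univ.erase c →
      D c (X d * g) = X c * X d * h' - X c * g' := by
    intro c d hcd g g' h' hKg hh' hSc hdc
    unfold D
    rw [← Finset.add_sum_erase _ _ hdc, hSc]
    have h1 : pderiv c (X d * g) = X d * pderiv c g := by
      rw [pderiv_mul, pderiv_X_of_ne (Ne.symm hcd), zero_mul, zero_add]
    have h2 : dd c d (X d * g) = X d * dd c d g - g' := by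
      rw [dd_mul hcd, dd_X_right hcd, hKg]
      ring
    have h3 : ∑ k ∈ S, X c * dd c k (X d * g) = X c * X d * ∑ k ∈ S, dd c k g := by
      rw [Finset.mul_sum]
      refine Finset.sum_congr rfl (fun k hk => ?_)
      rw [← hSc] at hk
      have hkd : k ≠ d := Finset.ne_of_mem_erase hk
      have hkc : k ≠ c := Finset.ne_of_mem_erase (Finset.mem_of_mem_erase hk)
      rw [dd_mul hkc.symm, dd_X_other hkc.symm (Ne.symm hcd) (Ne.symm hkd),
        mul_zero, add_zero]
      ring
    rw [h1, h2, h3, hh']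
    ring
  have hexp1 : D a (X b * gb) = X a * X b * hab' - X a * ga :=
    expand a b hab gb ga hab' hKgb h_hab haS hbea
  have hKga' : Kex b a ga = gb := by rw [Kex_comm]; exact hKga
  have hexp2 : D b (X a * ga) = X b * X a * hba' - X b * gb :=
    expand b a hab.symm ga gb hba' hKga' h_hba hbS haeb
  -- now show hab' = hba'
  have e_pd_a : pderiv a gb
      = C alpha * pderiv a (pderiv b q) + ∑ k ∈ S, dd b k (pderiv a q) := by
    rw [hgb_def, map_add, pderiv_C_mul, map_sum]
    congr 1
    exact Finset.sum_congr rfl fun k hk =>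
      pderiv_dd (Ne.symm (hSb k hk)) hab (Ne.symm (hSa k hk)) q
  have e_pd_b : pderiv b ga
      = C alpha * pderiv b (pderiv a q) + ∑ k ∈ S, dd a k (pderiv b q) := by
    rw [hga_def, map_add, pderiv_C_mul, map_sum]
    congr 1
    exact Finset.sum_congr rfl fun k hk =>
      pderiv_dd (Ne.symm (hSa k hk)) hab.symm (Ne.symm (hSb k hk)) q
  have hsum1 : ∑ k ∈ S, dd a k gb
      = C alpha * ∑ k ∈ S, dd a k (pderiv b q)
        + ∑ k ∈ S, ∑ l ∈ S, dd a k (dd b l q) := by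
    rw [Finset.mul_sum, ← Finset.sum_add_distrib]
    refine Finset.sum_congr rfl (fun k hk => ?_)
    rw [hgb_def, dd_add (Ne.symm (hSa k hk)), dd_C_mul (Ne.symm (hSa k hk)),
      dd_sum (Ne.symm (hSa k hk))]
  have hsum2 : ∑ k ∈ S, dd b k ga
      = C alpha * ∑ k ∈ S, dd b k (pderiv a q)
        + ∑ k ∈ S, ∑ l ∈ S, dd b k (dd a l q) := by
    rw [Finset.mul_sum, ← Finset.sum_add_distrib]
    refine Finset.sum_congr rfl (fun k hk => ?_)
    rw [hga_def, dd_add (Ne.symm (hSb k hk)), dd_C_mul (Ne.symm (hSb k hk)),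
      dd_sum (Ne.symm (hSb k hk))]
  have hdouble : ∑ k ∈ S, ∑ l ∈ S, dd a k (dd b l q)
      = ∑ k ∈ S, ∑ l ∈ S, dd b k (dd a l q) := by
    rw [Finset.sum_comm]
    refine Finset.sum_congr rfl fun l hl => Finset.sum_congr rfl fun k hk => ?_
    have hak : a ≠ k := Ne.symm (hSa k hk)
    have hbk : b ≠ k := Ne.symm (hSb k hk)
    have hal : a ≠ l := Ne.symm (hSa l hl)
    have hbl : b ≠ l := Ne.symm (hSb l hl)
    rcases eq_or_ne k l with rfl | hkl
    · exact dd_comm_symm hab hak hbk hq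
    · exact dd_comm_disjoint hak hbl hab hal (Ne.symm hbk) hkl q
  have hT3 : dd a b gb = dd b a ga := by
    have h0 : dd a b (gb + ga) = 0 :=
      dd_of_fixed hab (by rw [Kex_add, hKgb, hKga, add_comm])
    rw [dd_add hab] at h0
    rw [dd_rev hab ga]
    linear_combination h0
  have hkey : hab' = hba' := by
    rw [h_hab, h_hba, e_pd_a, e_pd_b, hsum1, hsum2, hdouble, hT3,
      pderiv_comm a b q]
    ring
  rw [hDb, hDa, hexp1, hexp2, hkey]
  ring

end Aux3
section Aux4
open MvPolynomial Finset
variable {n : ℕ}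

lemma zsmul_C (m : ℤ) (p : R n) : m • p = C (m : FF) * p := by
  rw [zsmul_eq_mul, ← map_intCast (C : FF →+* R n) m]

lemma D_add (i : Fin n) (p q : R n) : D i (p + q) = D i p + D i q := by
  unfold D
  rw [map_add]
  have h : ∀ j ∈ Finset.univ.erase i, X i * dd i j (p + q)
      = X i * dd i j p + X i * dd i j q := fun j hj => by
    rw [dd_add (Ne.symm (Finset.ne_of_mem_erase hj))]; ring
  rw [Finset.sum_congr rfl h, Finset.sum_add_distrib]
  ring

lemma D_C_mul (i : Fin n) (c : FF) (p : R n) : D i (C c * p) = C c * D i p := by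
  unfold D
  rw [pderiv_C_mul]
  have h : ∀ j ∈ Finset.univ.erase i, X i * dd i j (C c * p)
      = C c * (X i * dd i j p) := fun j hj => by
    rw [dd_C_mul (Ne.symm (Finset.ne_of_mem_erase hj))]; ring
  rw [Finset.sum_congr rfl h, mul_add, Finset.mul_sum]
  ring

lemma Dm_swap {a b : Fin n} (hab : a ≠ b) {q : R n} (hq : Kex a b q = q) (m : ℤ) :
    Dm a m (Dm b (m + 1) q) = Dm b m (Dm a (m + 1) q) := by
  unfold Dm
  have core := D_comm_symm hab hq
  simp only [zsmul_C, D_add, D_C_mul]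
  push_cast
  rw [map_add, map_one]
  linear_combination core

lemma rename_D (σ : Equiv.Perm (Fin n)) (m : Fin n) (p : R n) :
    rename σ (D m p) = D (σ m) (rename σ p) := by
  unfold D
  rw [map_add, map_mul, rename_C, map_mul, rename_X,
    pderiv_rename σ.injective m p]
  congr 1
  rw [map_sum]
  refine Finset.sum_equiv σ (fun j => ?_) (fun j hj => ?_)
  · simp [Finset.mem_erase, EmbeddingLike.apply_eq_iff_eq]
  · rw [map_mul, rename_X, rename_dd σ (Ne.symm (Finset.ne_of_mem_erase hj)) p]

end Aux4
section Aux5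
open MvPolynomial Finset
variable {n : ℕ}

lemma rename_Dm (σ : Equiv.Perm (Fin n)) (x : Fin n) (m : ℤ) (p : R n) :
    rename σ (Dm x m p) = Dm (σ x) m (rename σ p) := by
  unfold Dm
  rw [map_add, rename_D]
  congr 1
  rw [zsmul_C, zsmul_C, map_mul, rename_C]

lemma rename_DJl (σ : Equiv.Perm (Fin n)) (l : List (Fin n)) (m : ℤ) (p : R n) :
    rename σ (DJl l m p) = DJl (l.map σ) m (rename σ p) := by
  induction l generalizing m with
  | nil => rfl
  | cons x t ih =>
      show rename σ (Dm x m (DJl t (m + 1) p)) = Dm (σ x) m (DJl (t.map σ) (m + 1) (rename σ p))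
      rw [rename_Dm, ih]

lemma Kex_DJl {c d : Fin n} {l : List (Fin n)} (hc : c ∉ l) (hd : d ∉ l)
    {p : R n} (hp : p.IsSymmetric) (m : ℤ) :
    Kex c d (DJl l m p) = DJl l m p := by
  rw [Kex_eq_rename, rename_DJl, hp (Equiv.swap c d)]
  congr 1
  refine List.map_congr_left ?_ |>.trans l.map_id
  intro x hx
  exact Equiv.swap_apply_of_ne_of_ne (ne_of_mem_of_not_mem hx hc)
    (ne_of_mem_of_not_mem hx hd)

lemma DJl_perm {p : R n} (hp : p.IsSymmetric) {l1 l2 : List (Fin n)}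
    (hperm : l1.Perm l2) (hnd : l1.Nodup) (m : ℤ) :
    DJl l1 m p = DJl l2 m p := by
  induction hperm generalizing m with
  | nil => rfl
  | cons x h ih =>
      have hnd' := hnd
      rw [List.nodup_cons] at hnd'
      show Dm x m (DJl _ (m + 1) p) = Dm x m (DJl _ (m + 1) p)
      rw [ih hnd'.2 (m + 1)]
  | swap x y l =>
      have h1 : y ≠ x := by
        intro he
        rw [List.nodup_cons] at hnd
        exact hnd.1 (he ▸ (List.mem_cons_self : x ∈ x :: l))
      have hyl : y ∉ l := by
        rw [List.nodup_cons] at hnd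
        exact fun hm => hnd.1 (List.mem_cons_of_mem x hm)
      have hxl : x ∉ l := by
        rw [List.nodup_cons, List.nodup_cons] at hnd
        exact hnd.2.1
      show Dm y m (Dm x (m + 1) (DJl l (m + 1 + 1) p))
        = Dm x m (Dm y (m + 1) (DJl l (m + 1 + 1) p))
      exact Dm_swap h1 (Kex_DJl hyl hxl hp (m + 1 + 1)) m
  | trans h1 h2 ih1 ih2 =>
      rw [ih1 hnd m, ih2 ((List.Perm.nodup_iff h1).mp hnd) m]

theorem Bop_symmetric' (n i : ℕ) (p : R n)
    (hp : p.IsSymmetric) : (Bop i p).IsSymmetric := by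
  intro σ
  unfold Bop
  rw [map_sum]
  refine Finset.sum_nbij' (fun J => J.image σ) (fun J => J.image σ.symm)
    ?_ ?_ ?_ ?_ ?_
  · intro J hJ
    rw [Finset.mem_powersetCard_univ] at hJ ⊢
    rw [Finset.card_image_of_injective J σ.injective, hJ]
  · intro J hJ
    rw [Finset.mem_powersetCard_univ] at hJ ⊢
    rw [Finset.card_image_of_injective J σ.symm.injective, hJ]
  · intro J _
    simp [Finset.image_image]
  · intro J _
    simp [Finset.image_image]
  · intro J _
    rw [map_mul]
    congr 1
    · rw [map_prod]
      exact (Finset.prod_congr rfl fun k _ => rename_X σ k).trans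
        (Finset.prod_image (fun x _ y _ h => σ.injective h)).symm
    · show rename (⇑σ) (DJ J p) = DJ (J.image ⇑σ) p
      unfold DJ
      rw [rename_DJl, hp σ]
      refine DJl_perm hp ?_ ?_ 1
      · rw [← Multiset.coe_eq_coe, ← Multiset.map_coe, Finset.sort_eq, Finset.sort_eq,
          Finset.image_val_of_injOn (σ.injective.injOn)]
      · exact List.Nodup.map σ.injective (Finset.sort_nodup J _)

end Aux5

/-- `B_i^+` maps symmetric polynomials to symmetric polynomials. -/
theorem Bop_symmetric (n i : ℕ) (h1 : 1 ≤ i) (h2 : i ≤ n) (p : R n)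
    (hp : p.IsSymmetric) : (Bop i p).IsSymmetric := by
  exact Bop_symmetric' n i p hp
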